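/- Let T = (V,E) be a tree on d ≥ 3 vertices with edge correlations ρ : E → (−1,1)∖{0}, and let ρ_new ∈ (−1,1)∖{0} satisfy |ρ_new| < |ρ_e| for every e ∈ E. For a vertex v ∈ V, let T_v denote the tree obtained from T by attaching one new leaf vertex to v by an edge with correlation ρ_new. For v ∈ V set m(v) := max{|ρ_e| : e ∈ E, e contains v}. Then for all u, v ∈ V, if m(u) ≤ m(v) then K̃(T_u) ≥ K̃(T_v). Consequently, the loss K̃(T) − K̃(T_v) is minimized over v ∈ V at any vertex minimizing m(v), and maximized at any vertex maximizing m(v). -/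

import Mathlib

noncomputable def Jt (a b : ℝ) : ℝ :=
  ((1 / 2) * Real.log ((1 - b ^ 2) / (1 - a ^ 2))) ^ 2 /
    (2 * (b ^ 4 + b ^ 2) / (1 - b ^ 2) ^ 2 + 2 * (a ^ 4 + a ^ 2) / (1 - a ^ 2) ^ 2
      - 4 * b ^ 2 * (a ^ 2 + 1) / ((1 - b ^ 2) * (1 - a ^ 2)))

/-- The approximate error exponent K̃(G,ρ): the infimum of J̃(ρ_e, ρ_{e′}) over all
non-edges e′ = {u,v} and all edges e on the (unique) path joining u and v, where the
correlation of the non-edge is the product of the edge correlations along that path. -/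
noncomputable def Ktilde {V : Type*} (G : SimpleGraph V) (ρ : Sym2 V → ℝ) : ℝ :=
  sInf { x : ℝ | ∃ (u v : V) (p : G.Walk u v), p.IsPath ∧ u ≠ v ∧ ¬ G.Adj u v ∧
    ∃ e ∈ p.edges, x = Jt (ρ e) ((p.edges.map ρ).prod) }

/-- Attach a new leaf (the vertex `none`) to the vertex `v` of `G`. -/
def attachLeaf {V : Type*} (G : SimpleGraph V) (v : V) : SimpleGraph (Option V) where
  Adj x y := (∃ a b, x = some a ∧ y = some b ∧ G.Adj a b)
    ∨ (x = some v ∧ y = none) ∨ (x = none ∧ y = some v)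
  symm := by
    constructor
    rintro x y (⟨a, b, rfl, rfl, hab⟩ | ⟨rfl, rfl⟩ | ⟨rfl, rfl⟩)
    · exact Or.inl ⟨b, a, rfl, rfl, hab.symm⟩
    · exact Or.inr (Or.inr ⟨rfl, rfl⟩)
    · exact Or.inr (Or.inl ⟨rfl, rfl⟩)
  loopless := by
    constructor
    rintro x (⟨a, b, rfl, h, hab⟩ | ⟨rfl, h⟩ | ⟨h, h'⟩)
    · obtain rfl := Option.some.inj h
      exact G.loopless.irrefl a hab
    · exact Option.noConfusion rfl (heq_of_eq h)
    · exact Option.noConfusion rfl (heq_of_eq (h ▸ h'))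

/-- Edge correlations on the extended tree: old edges keep their correlation, and the new
edge (any pair involving `none`) carries ρnew. -/
noncomputable def extendRho {V : Type*} (ρ : Sym2 V → ℝ) (ρnew : ℝ) :
    Sym2 (Option V) → ℝ :=
  Sym2.lift ⟨fun x y => match x, y with
    | some a, some b => ρ s(a, b)
    | _, _ => ρnew, by
    intro x y
    match x, y with
    | some a, some b => exact congrArg ρ Sym2.eq_swap
    | some a, none => rfl
    | none, some b => rfl
    | none, none => rfl⟩

/-- m(v): the maximum of |ρ_e| over edges e containing the vertex v. -/
noncomputable def mdeg {V : Type*} (G : SimpleGraph V) (ρ : Sym2 V → ℝ) (v : V) : ℝ :=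
  sSup { y : ℝ | ∃ e ∈ G.edgeSet, v ∈ e ∧ y = |ρ e| }

lemma Jt_eq (a b : ℝ) (ha : a ^ 2 < 1) (hb : b ^ 2 < 1) :
    Jt a b = ((1 / 2) * (Real.log (1 / (1 - a ^ 2)) - Real.log (1 / (1 - b ^ 2)))) ^ 2 /
      (4 * (1 / (1 - a ^ 2) - 1 / (1 - b ^ 2)) ^ 2 + 2 * (1 / (1 - a ^ 2) - 1 / (1 - b ^ 2))) := by
  have h1 : (1 : ℝ) - a ^ 2 ≠ 0 := by nlinarith
  have h2 : (1 : ℝ) - b ^ 2 ≠ 0 := by nlinarith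
  unfold Jt
  congr 1
  · rw [Real.log_div h2 h1, Real.log_div one_ne_zero h1, Real.log_div one_ne_zero h2,
      Real.log_one]
    ring
  · field_simp
    ring

lemma slope_aux (W₁ W₂ X : ℝ) (h0 : 0 < W₁) (h12 : W₁ ≤ W₂) (h2X : W₂ < X) :
    (Real.log X - Real.log W₂) * (X - W₁) ≤ (Real.log X - Real.log W₁) * (X - W₂) := by
  have ht1 : 0 < X - W₁ := by linarith
  have ht2 : 0 < X - W₂ := by linarith
  have hXpos : 0 < X := by linarith
  have hcc := (strictConcaveOn_log_Ioi.concaveOn).2 (Set.mem_Ioi.mpr h0)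
    (Set.mem_Ioi.mpr hXpos)
    (by positivity : (0:ℝ) ≤ (X - W₂) / (X - W₁))
    (by apply div_nonneg _ ht1.le; linarith : (0:ℝ) ≤ (W₂ - W₁) / (X - W₁))
    (by field_simp; ring)
  have hcomb : ((X - W₂) / (X - W₁)) • W₁ + ((W₂ - W₁) / (X - W₁)) • X = W₂ := by
    simp only [smul_eq_mul]
    field_simp
    ring
  rw [hcomb] at hcc
  simp only [smul_eq_mul] at hcc
  have h3 := mul_le_mul_of_nonneg_left hcc ht1.le
  have hexp : (X - W₁) * ((X - W₂) / (X - W₁) * Real.log W₁ + (W₂ - W₁) / (X - W₁) * Real.log X)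
      = (X - W₂) * Real.log W₁ + (W₂ - W₁) * Real.log X := by
    field_simp
  rw [hexp] at h3
  nlinarith [h3]

lemma main_aux (W₁ W₂ X : ℝ) (h0 : 0 < W₁) (h12 : W₁ ≤ W₂) (h2X : W₂ < X) :
    ((1/2) * (Real.log X - Real.log W₂)) ^ 2 / (4 * (X - W₂) ^ 2 + 2 * (X - W₂)) ≤
      ((1/2) * (Real.log X - Real.log W₁)) ^ 2 / (4 * (X - W₁) ^ 2 + 2 * (X - W₁)) := by
  have ht1 : 0 < X - W₁ := by linarith
  have ht2 : 0 < X - W₂ := by linarith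
  have hXpos : 0 < X := by linarith
  have hD2 : 0 ≤ Real.log X - Real.log W₂ := by
    have := Real.log_le_log (by linarith) h2X.le
    linarith
  have hD12 : Real.log X - Real.log W₂ ≤ Real.log X - Real.log W₁ := by
    have := Real.log_le_log h0 h12
    linarith
  have hslope := slope_aux W₁ W₂ X h0 h12 h2X
  set D₁ : ℝ := Real.log X - Real.log W₁
  set D₂ : ℝ := Real.log X - Real.log W₂
  set t₁ : ℝ := X - W₁
  set t₂ : ℝ := X - W₂
  rw [div_le_div_iff₀ (by nlinarith) (by nlinarith)]
  have h4 : D₂ ^ 2 * t₁ ^ 2 ≤ D₁ ^ 2 * t₂ ^ 2 := by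
    have h0' : 0 ≤ D₂ * t₁ := mul_nonneg hD2 ht1.le
    have := mul_self_le_mul_self h0' hslope
    nlinarith [this]
  have h5 : D₂ ^ 2 * t₁ ≤ D₁ ^ 2 * t₂ := by
    have s1 : D₂ * (D₂ * t₁) ≤ D₂ * (D₁ * t₂) := mul_le_mul_of_nonneg_left hslope hD2
    have s2 : D₂ * (D₁ * t₂) ≤ D₁ * (D₁ * t₂) :=
      mul_le_mul_of_nonneg_right hD12 (by nlinarith)
    nlinarith [s1, s2]
  ring_nf at h4 h5 ⊢
  linarith [h4, h5]

lemma Jt_nonneg (a b : ℝ) (ha : a ^ 2 < 1) (hb : b ^ 2 ≤ a ^ 2) : 0 ≤ Jt a b := by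
  have hb1 : b ^ 2 < 1 := lt_of_le_of_lt hb ha
  rw [Jt_eq a b ha hb1]
  apply div_nonneg (sq_nonneg _)
  have h1 : (0:ℝ) < 1 - a ^ 2 := by nlinarith
  have h2 : (0:ℝ) < 1 - b ^ 2 := by nlinarith
  have ht : 0 ≤ 1 / (1 - a ^ 2) - 1 / (1 - b ^ 2) := by
    have := one_div_le_one_div_of_le h1 (by nlinarith : 1 - a^2 ≤ 1 - b^2)
    linarith
  have h3 := sq_nonneg (1 / (1 - a ^ 2) - 1 / (1 - b ^ 2))
  linarith

lemma Jt_anti (a b₁ b₂ : ℝ) (h1 : b₁ ^ 2 ≤ b₂ ^ 2) (h2 : b₂ ^ 2 < a ^ 2) (ha : a ^ 2 < 1) :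
    Jt a b₂ ≤ Jt a b₁ := by
  have hb2 : b₂ ^ 2 < 1 := lt_trans h2 ha
  have hb1 : b₁ ^ 2 < 1 := lt_of_le_of_lt h1 hb2
  have hA : (0:ℝ) < 1 - a ^ 2 := by nlinarith
  have hB2 : (0:ℝ) < 1 - b₂ ^ 2 := by nlinarith
  have hB1 : (0:ℝ) < 1 - b₁ ^ 2 := by nlinarith
  rw [Jt_eq a b₂ ha hb2, Jt_eq a b₁ ha hb1]
  apply main_aux
  · positivity
  · apply one_div_le_one_div_of_le hB2 (by nlinarith)
  · apply one_div_lt_one_div_of_lt hA (by nlinarith)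

section Basics
variable {V : Type*} {G : SimpleGraph V} {c : V} {ρ : Sym2 V → ℝ} {ρnew : ℝ}

lemma attach_adj_some_iff {a b : V} :
    (attachLeaf G c).Adj (some a) (some b) ↔ G.Adj a b := by
  constructor
  · rintro (⟨x, y, hx, hy, h⟩ | ⟨h1, h2⟩ | ⟨h1, h2⟩)
    · obtain rfl := Option.some.inj hx
      obtain rfl := Option.some.inj hy
      exact h
    · exact Option.noConfusion rfl (heq_of_eq h2)
    · exact Option.noConfusion rfl (heq_of_eq h1)
  · exact fun h => Or.inl ⟨a, b, rfl, rfl, h⟩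

lemma attach_adj_none_iff {x : Option V} :
    (attachLeaf G c).Adj none x ↔ x = some c := by
  constructor
  · rintro (⟨a, b, h1, h2, h⟩ | ⟨h1, h2⟩ | ⟨h1, h2⟩)
    · exact Option.noConfusion rfl (heq_of_eq h1)
    · exact Option.noConfusion rfl (heq_of_eq h1)
    · exact h2
  · rintro rfl
    exact Or.inr (Or.inr ⟨rfl, rfl⟩)

lemma attach_adj_none_right_iff {x : Option V} :
    (attachLeaf G c).Adj x none ↔ x = some c := by
  rw [(attachLeaf G c).adj_comm, attach_adj_none_iff]

lemma extendRho_some (a b : V) :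
    extendRho ρ ρnew s(some a, some b) = ρ s(a, b) := rfl

lemma extendRho_map (e : Sym2 V) : extendRho ρ ρnew (e.map some) = ρ e := by
  induction e using Sym2.ind with
  | _ a b => rfl

lemma extendRho_none_left (x : Option V) : extendRho ρ ρnew s(none, x) = ρnew := by
  cases x <;> rfl

def someHom (G : SimpleGraph V) (c : V) : G →g attachLeaf G c :=
  ⟨some, fun {a b} h => Or.inl ⟨a, b, rfl, rfl, h⟩⟩

@[simp] lemma someHom_coe : ⇑(someHom G c) = some := rfl

lemma edges_map_someHom {a b : V} (q : G.Walk a b) :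
    (q.map (someHom G c)).edges = q.edges.map (Sym2.map some) := by
  rw [SimpleGraph.Walk.edges_map]
  rfl

lemma prod_map_ext (l : List (Sym2 V)) :
    ((l.map (Sym2.map some)).map (extendRho ρ ρnew)).prod = (l.map ρ).prod := by
  rw [List.map_map]
  congr 1
  exact List.map_congr_left fun e _ => extendRho_map e

end Basics

section Walks
open SimpleGraph
variable {V : Type*} {G : SimpleGraph V} {c : V}

lemma walk_of_attach :
    ∀ {x y : Option V} (p : (attachLeaf G c).Walk x y), none ∉ p.support →
      ∀ {a b : V}, x = some a → y = some b →
        ∃ q : G.Walk a b, p.edges = q.edges.map (Sym2.map some) ∧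
          p.support = q.support.map some := by
  intro x y p
  induction p with
  | nil =>
    rintro _ a b rfl hy
    obtain rfl := Option.some.inj hy
    exact ⟨Walk.nil, by simp, by simp⟩
  | @cons x' v' y' h p ih =>
    rintro hnone a b rfl rfl
    rw [Walk.support_cons] at hnone
    have hnp : none ∉ p.support := fun hmem => hnone (List.mem_cons_of_mem _ hmem)
    cases v' with
    | none => exact absurd p.start_mem_support hnp
    | some a₁ =>
      have hadj : G.Adj a a₁ := attach_adj_some_iff.mp h
      obtain ⟨q, hq1, hq2⟩ := ih hnp rfl rfl
      refine ⟨Walk.cons hadj q, ?_, ?_⟩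
      · rw [Walk.edges_cons, Walk.edges_cons, hq1, List.map_cons, Sym2.map_pair_eq]
      · rw [Walk.support_cons, Walk.support_cons, hq2, List.map_cons]

lemma none_not_mem_support :
    ∀ {x y : Option V} (p : (attachLeaf G c).Walk x y), p.IsPath →
      x ≠ none → y ≠ none → none ∉ p.support := by
  intro x y p
  induction p with
  | nil =>
    intro _ hx _
    simp [Walk.support_nil]
    intro h
    exact hx h.symm
  | @cons x' v' y' h p ih =>
    intro hp hx hy
    rw [Walk.support_cons]
    rw [Walk.cons_isPath_iff] at hp
    intro hmem
    rcases List.mem_cons.mp hmem with h1 | h2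
    · exact hx h1.symm
    · cases v' with
      | some a₁ =>
        exact ih hp.1 (by simp) hy h2
      | none =>
        -- p : Walk none y', y' ≠ none, so p = cons ...
        cases p with
        | nil => exact hy rfl
        | @cons _ v'' _ h₂ p₂ =>
          have hx' : x' = some c := attach_adj_none_right_iff.mp h
          have hv'' : v'' = some c := attach_adj_none_iff.mp h₂
          apply hp.2
          rw [Walk.support_cons]
          apply List.mem_cons_of_mem
          rw [hx', ← hv'']
          exact p₂.start_mem_support

lemma walk_from_none {w : V} (p : (attachLeaf G c).Walk none (some w)) (hp : p.IsPath) :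
    ∃ q : G.Walk c w, q.IsPath ∧
      p.edges = s((none : Option V), some c) :: q.edges.map (Sym2.map some) := by
  cases p with
  | @cons _ v' _ h p' =>
    have hv' : v' = some c := attach_adj_none_iff.mp h
    subst hv'
    rw [Walk.cons_isPath_iff] at hp
    obtain ⟨q, hq1, hq2⟩ := walk_of_attach p' hp.2 rfl rfl
    refine ⟨q, ?_, ?_⟩
    · rw [Walk.isPath_def] at hp ⊢
      have := hp.1
      rw [hq2] at this
      exact this.of_map
    · rw [Walk.edges_cons, hq1]

lemma two_le_edges_length {W : Type*} {H : SimpleGraph W} {u v : W} (p : H.Walk u v)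
    (hne : u ≠ v) (hnadj : ¬ H.Adj u v) : 2 ≤ p.edges.length := by
  cases p with
  | nil => exact absurd rfl hne
  | @cons _ v' _ h p' =>
    cases p' with
    | nil => exact absurd h hnadj
    | cons h₂ p₂ => simp [Walk.edges_cons]

end Walks

section Lists

lemma list_prod_abs_le_one : ∀ (l : List ℝ), (∀ z ∈ l, |z| ≤ 1) → |l.prod| ≤ 1 := by
  intro l
  induction l with
  | nil => simp
  | cons a t ih =>
    intro h
    rw [List.prod_cons, abs_mul]
    have ha := h a List.mem_cons_self
    have ht := ih fun z hz => h z (List.mem_cons_of_mem a hz)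
    calc |a| * |t.prod| ≤ 1 * 1 := by
          apply mul_le_mul ha ht (abs_nonneg _) zero_le_one
      _ = 1 := by ring

lemma list_prod_abs_lt_one (l : List ℝ) (hne : l ≠ []) (h : ∀ z ∈ l, |z| < 1) :
    |l.prod| < 1 := by
  cases l with
  | nil => exact absurd rfl hne
  | cons a t =>
    rw [List.prod_cons, abs_mul]
    have ha := h a List.mem_cons_self
    have ht := list_prod_abs_le_one t fun z hz => (h z (List.mem_cons_of_mem a hz)).le
    calc |a| * |t.prod| ≤ |a| * 1 := by
          apply mul_le_mul_of_nonneg_left ht (abs_nonneg _)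
      _ = |a| := by ring
      _ < 1 := ha

lemma prod_factor {α : Type*} (ρ : α → ℝ) (l : List α) {e : α} (he : e ∈ l) :
    ∃ l' : List α, (l.map ρ).prod = ρ e * (l'.map ρ).prod ∧ (∀ z ∈ l', z ∈ l) ∧
      (2 ≤ l.length → l' ≠ []) := by
  classical
  refine ⟨l.erase e, ?_, fun z hz => List.mem_of_mem_erase hz, ?_⟩
  · rw [← List.prod_map_erase ρ he]
  · intro h2 hnil
    have := l.length_erase_of_mem he
    rw [hnil] at this
    simp at this
    omega

end Lists

section Mdeg
open SimpleGraph
variable {V : Type*} [Fintype V] {G : SimpleGraph V} (ρ : Sym2 V → ℝ)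

lemma mdeg_set_finite (v : V) : { y : ℝ | ∃ e ∈ G.edgeSet, v ∈ e ∧ y = |ρ e| }.Finite := by
  have : { y : ℝ | ∃ e ∈ G.edgeSet, v ∈ e ∧ y = |ρ e| }
      = (fun e => |ρ e|) '' { e | e ∈ G.edgeSet ∧ v ∈ e } := by
    ext y
    simp only [Set.mem_setOf_eq, Set.mem_image]
    constructor
    · rintro ⟨e, h1, h2, rfl⟩; exact ⟨e, ⟨h1, h2⟩, rfl⟩
    · rintro ⟨e, ⟨h1, h2⟩, rfl⟩; exact ⟨e, h1, h2, rfl⟩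
  rw [this]
  exact (Set.toFinite _).image _

lemma mdeg_attained (hG : G.Connected) (hcard : 2 ≤ Fintype.card V) (v : V) :
    ∃ e ∈ G.edgeSet, v ∈ e ∧ mdeg G ρ v = |ρ e| := by
  obtain ⟨w, hw⟩ := Fintype.exists_ne_of_one_lt_card (by omega) v
  obtain ⟨p⟩ := hG.preconnected v w
  have hvw : v ≠ w := hw.symm
  have hne : { y : ℝ | ∃ e ∈ G.edgeSet, v ∈ e ∧ y = |ρ e| }.Nonempty := by
    cases p with
    | nil => exact absurd rfl hvw
    | @cons _ v' _ h p' =>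
      exact ⟨|ρ s(v, v')|, s(v, v'), h, Sym2.mem_mk_left v v', rfl⟩
  have hmem := hne.csSup_mem (mdeg_set_finite ρ v)
  obtain ⟨e, h1, h2, h3⟩ := hmem
  exact ⟨e, h1, h2, h3⟩

lemma le_mdeg {f : Sym2 V} (hf : f ∈ G.edgeSet) (v : V) (hvf : v ∈ f) :
    |ρ f| ≤ mdeg G ρ v :=
  le_csSup (mdeg_set_finite ρ v).bddAbove ⟨f, hf, hvf, rfl⟩

end Mdeg

section Flank
open SimpleGraph
variable {V : Type*} {G : SimpleGraph V}

lemma no_triangle (hG : G.IsTree) {p q r : V} (h₁ : G.Adj p q) (h₂ : G.Adj q r)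
    (hpr : p ≠ r) : ¬ G.Adj p r := by
  intro h
  have hp1 : (Walk.cons h Walk.nil).IsPath := by
    rw [Walk.isPath_def]
    simp [hpr]
  have hp2 : (Walk.cons h₁ (Walk.cons h₂ Walk.nil)).IsPath := by
    rw [Walk.isPath_def]
    simp [h₁.ne, hpr, h₂.ne]
  obtain ⟨P, _, hun⟩ := hG.existsUnique_path p r
  have e1 := hun _ hp1
  have e2 := hun _ hp2
  rw [← e2] at e1
  have := congrArg Walk.length e1
  simp [Walk.length_cons] at this

lemma exists_flank [Fintype V] (hG : G.IsTree) (hcard : 3 ≤ Fintype.card V)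
    {e₀ : Sym2 V} (he₀ : e₀ ∈ G.edgeSet) :
    ∃ z w₁ w₂ : V, G.Adj z w₁ ∧ G.Adj w₁ w₂ ∧ z ≠ w₂ ∧ ¬ G.Adj z w₂ ∧ s(w₁, w₂) = e₀ := by
  classical
  induction e₀ using Sym2.ind with
  | _ cc d =>
  have h : G.Adj cc d := he₀
  -- find z₀ outside {cc, d}
  have : ∃ z₀ : V, z₀ ≠ cc ∧ z₀ ≠ d := by
    by_contra hcon
    push_neg at hcon
    have hsub : (Finset.univ : Finset V) ⊆ {cc, d} := by
      intro z _
      rcases Classical.em (z = cc) with h1 | h1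
      · simp [h1]
      · simp [hcon z h1]
    have := Finset.card_le_card hsub
    have h2 : ({cc, d} : Finset V).card ≤ 2 := Finset.card_insert_le _ _ |>.trans (by simp)
    rw [Finset.card_univ] at this
    omega
  obtain ⟨z₀, hz₀c, hz₀d⟩ := this
  obtain ⟨W0⟩ := hG.isConnected.preconnected cc z₀
  obtain ⟨W, hWp⟩ := W0.toPath
  cases W with
  | nil => exact absurd rfl hz₀c.symm
  | @cons _ x₁ _ h₁ Q =>
    by_cases hx1 : x₁ = d
    · subst hx1
      cases Q with
      | nil => exact absurd rfl hz₀d.symm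
      | @cons _ x₂ _ h₂ Q₂ =>
        have hx₂c : x₂ ≠ cc := by
          intro hcon
          rw [Walk.cons_isPath_iff] at hWp
          apply hWp.2
          rw [Walk.support_cons]
          apply List.mem_cons_of_mem
          rw [← hcon]
          exact Q₂.start_mem_support
        refine ⟨x₂, x₁, cc, h₂.symm, h.symm, hx₂c, ?_, Sym2.eq_swap⟩
        exact no_triangle hG h₂.symm h.symm hx₂c
    · refine ⟨x₁, cc, d, h₁.symm, h, hx1, ?_, rfl⟩
      exact no_triangle hG h₁.symm h hx1

end Flank

/-! ### Auxiliary: squares and abs -/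

lemma sq_le_of_abs_le {x y : ℝ} (h : |x| ≤ |y|) : x ^ 2 ≤ y ^ 2 := by
  rw [← sq_abs x, ← sq_abs y]
  exact pow_le_pow_left₀ (abs_nonneg x) h 2

lemma sq_lt_of_abs_lt {x y : ℝ} (h : |x| < |y|) : x ^ 2 < y ^ 2 := by
  rw [← sq_abs x, ← sq_abs y]
  exact pow_lt_pow_left₀ h (abs_nonneg x) (by norm_num)

lemma sq_lt_one_of_abs_lt_one {y : ℝ} (h : |y| < 1) : y ^ 2 < 1 := by
  have := sq_lt_of_abs_lt (by simpa using h : |y| < |(1:ℝ)|)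
  simpa using this

/-! ### The set of candidate exponents -/

def KSet {V : Type*} (G : SimpleGraph V) (ρ : Sym2 V → ℝ) : Set ℝ :=
  { x : ℝ | ∃ (u v : V) (p : G.Walk u v), p.IsPath ∧ u ≠ v ∧ ¬ G.Adj u v ∧
    ∃ e ∈ p.edges, x = Jt (ρ e) ((p.edges.map ρ).prod) }

lemma Ktilde_eq_sInf {V : Type*} (G : SimpleGraph V) (ρ : Sym2 V → ℝ) :
    Ktilde G ρ = sInf (KSet G ρ) := rfl

section EdgeBounds
open SimpleGraph
variable {V : Type*} {G : SimpleGraph V} {c : V} {ρ : Sym2 V → ℝ} {ρnew : ℝ}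

lemma attach_edge_bound (hρ : ∀ e ∈ G.edgeSet, ρ e ∈ Set.Ioo (-1 : ℝ) 1 ∧ ρ e ≠ 0)
    (hnew : ρnew ∈ Set.Ioo (-1 : ℝ) 1) (hnew0 : ρnew ≠ 0) :
    ∀ e ∈ (attachLeaf G c).edgeSet,
      |extendRho ρ ρnew e| < 1 ∧ extendRho ρ ρnew e ≠ 0 := by
  intro e
  induction e using Sym2.ind with
  | _ x y =>
    intro he
    have hadj : (attachLeaf G c).Adj x y := he
    rcases hadj with ⟨a, b, rfl, rfl, hab⟩ | ⟨rfl, rfl⟩ | ⟨rfl, rfl⟩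
    · rw [extendRho_some]
      have h := hρ s(a, b) hab
      exact ⟨abs_lt.mpr ⟨h.1.1, h.1.2⟩, h.2⟩
    · have hv : extendRho ρ ρnew s(some c, none) = ρnew := by
        rw [Sym2.eq_swap]
        exact extendRho_none_left _
      rw [hv]
      exact ⟨abs_lt.mpr ⟨hnew.1, hnew.2⟩, hnew0⟩
    · rw [extendRho_none_left]
      exact ⟨abs_lt.mpr ⟨hnew.1, hnew.2⟩, hnew0⟩

end EdgeBounds

section KSetFacts
open SimpleGraph

lemma KSet_nonneg {W : Type*} {H : SimpleGraph W} {σ : Sym2 W → ℝ}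
    (hσ : ∀ e ∈ H.edgeSet, |σ e| < 1 ∧ σ e ≠ 0) :
    ∀ x ∈ KSet H σ, 0 ≤ x := by
  rintro x ⟨p, q, P, hP, hne, hnadj, e, he, rfl⟩
  have hesub := P.edges_subset_edgeSet
  obtain ⟨l', hfac, hsub, -⟩ := prod_factor σ P.edges he
  have hrest : |(l'.map σ).prod| ≤ 1 := by
    apply list_prod_abs_le_one
    intro z hz
    obtain ⟨f, hf, rfl⟩ := List.mem_map.mp hz
    exact (hσ f (hesub (hsub f hf))).1.le
  have habs : |(P.edges.map σ).prod| ≤ |σ e| := by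
    rw [hfac, abs_mul]
    calc |σ e| * |(l'.map σ).prod| ≤ |σ e| * 1 :=
          mul_le_mul_of_nonneg_left hrest (abs_nonneg _)
      _ = |σ e| := by ring
  exact Jt_nonneg _ _ (sq_lt_one_of_abs_lt_one (hσ e (hesub he)).1) (sq_le_of_abs_le habs)

lemma KSet_attach_nonempty {V : Type*} [Fintype V] {G : SimpleGraph V}
    (hG : G.Connected) (hcard : 3 ≤ Fintype.card V) (c : V) (σ : Sym2 (Option V) → ℝ) :
    (KSet (attachLeaf G c) σ).Nonempty := by
  classical
  obtain ⟨w, hw⟩ := Fintype.exists_ne_of_one_lt_card (by omega) c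
  obtain ⟨W0⟩ := hG.preconnected c w
  obtain ⟨q, hq⟩ := W0.toPath
  have hadj : (attachLeaf G c).Adj none (some c) := attach_adj_none_iff.mpr rfl
  refine ⟨_, none, some w, Walk.cons hadj (q.map (someHom G c)), ?_, by simp, ?_,
    s((none : Option V), some c), ?_, rfl⟩
  · refine (Walk.cons_isPath_iff _ _).mpr ⟨Walk.map_isPath_of_injective (Option.some_injective V) hq, ?_⟩
    erw [Walk.support_map]
    simp
  · rw [attach_adj_none_iff]
    simp [hw]
  · exact List.mem_cons_self

end KSetFacts

section Main
open SimpleGraph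

variable {V : Type*} [Fintype V]

lemma leaf_case (hcard : 3 ≤ Fintype.card V)
    (G : SimpleGraph V) (hG : G.IsTree) (ρ : Sym2 V → ℝ)
    (hρ : ∀ e ∈ G.edgeSet, ρ e ∈ Set.Ioo (-1 : ℝ) 1 ∧ ρ e ≠ 0)
    (ρnew : ℝ) (hnew : ρnew ∈ Set.Ioo (-1 : ℝ) 1) (hnew0 : ρnew ≠ 0)
    (hless : ∀ e ∈ G.edgeSet, |ρnew| < |ρ e|)
    (u v : V) (huv : mdeg G ρ u ≤ mdeg G ρ v)
    {w : V} (P : (attachLeaf G u).Walk none (some w)) (hP : P.IsPath)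
    (hnadj : ¬ (attachLeaf G u).Adj none (some w))
    {e : Sym2 (Option V)} (he : e ∈ P.edges) :
    ∃ y ∈ KSet (attachLeaf G v) (extendRho ρ ρnew),
      y ≤ Jt (extendRho ρ ρnew e) ((P.edges.map (extendRho ρ ρnew)).prod) := by
  have habsE : ∀ f ∈ G.edgeSet, |ρ f| < 1 := fun f hf =>
    abs_lt.mpr ⟨(hρ f hf).1.1, (hρ f hf).1.2⟩
  have hnewabs : |ρnew| < 1 := abs_lt.mpr ⟨hnew.1, hnew.2⟩
  obtain ⟨q, hqPath, hedges⟩ := walk_from_none P hP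
  have hwu : w ≠ u := by
    intro hcon
    exact hnadj (attach_adj_none_iff.mpr (by rw [hcon]))
  have hprod : (P.edges.map (extendRho ρ ρnew)).prod = ρnew * (q.edges.map ρ).prod := by
    rw [hedges, List.map_cons, List.prod_cons, extendRho_none_left, prod_map_ext]
  set π := (q.edges.map ρ).prod with hπ
  -- bound |π| ≤ |ρ e₁| for the first edge e₁ of q, which contains u
  have hfirst : ∃ e₁, e₁ ∈ q.edges ∧ u ∈ e₁ ∧ |π| ≤ |ρ e₁| := by
    cases q with
    | nil => exact absurd rfl hwu.symm
    | @cons _ v' _ h q₂ =>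
      refine ⟨s(u, v'), List.mem_cons_self, Sym2.mem_mk_left _ _, ?_⟩
      rw [hπ, Walk.edges_cons, List.map_cons, List.prod_cons, abs_mul]
      have ht : |(q₂.edges.map ρ).prod| ≤ 1 := by
        apply list_prod_abs_le_one
        intro z hz
        obtain ⟨f, hf, rfl⟩ := List.mem_map.mp hz
        exact (habsE f (q₂.edges_subset_edgeSet hf)).le
      calc |ρ s(u, v')| * |(q₂.edges.map ρ).prod| ≤ |ρ s(u, v')| * 1 :=
            mul_le_mul_of_nonneg_left ht (abs_nonneg _)
        _ = |ρ s(u, v')| := by ring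
  obtain ⟨e₁, he₁q, he₁u, hπe₁⟩ := hfirst
  obtain ⟨ev, hev, hvev, hmv⟩ := mdeg_attained ρ hG.isConnected (by omega) v
  have hπev : |π| ≤ |ρ ev| := by
    calc |π| ≤ |ρ e₁| := hπe₁
      _ ≤ mdeg G ρ u := le_mdeg ρ (q.edges_subset_edgeSet he₁q) u he₁u
      _ ≤ mdeg G ρ v := huv
      _ = |ρ ev| := hmv
  have hspec : s(v, Sym2.Mem.other hvev) = ev := Sym2.other_spec hvev
  set w' := Sym2.Mem.other hvev with hw'
  have hadj_v : G.Adj v w' := by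
    rw [← SimpleGraph.mem_edgeSet, hspec]
    exact hev
  have hw'v : w' ≠ v := hadj_v.ne'
  rw [hedges] at he
  rcases List.mem_cons.mp he with rfl | hemem
  · -- e is the new edge
    rw [hprod, extendRho_none_left]
    have hadj1 : (attachLeaf G v).Adj none (some v) := attach_adj_none_iff.mpr rfl
    have hadj2 : (attachLeaf G v).Adj (some v) (some w') := attach_adj_some_iff.mpr hadj_v
    refine ⟨Jt ρnew (ρnew * ρ ev), ⟨none, some w',
      Walk.cons hadj1 (Walk.cons hadj2 Walk.nil), ?_, by simp, ?_,
      s((none : Option V), some v), List.mem_cons_self, ?_⟩, ?_⟩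
    · rw [Walk.isPath_def]
      simp [hw'v.symm]
    · rw [attach_adj_none_iff]
      simp [hw'v]
    · simp only [Walk.edges_cons, Walk.edges_nil, List.map_cons, List.map_nil,
        List.prod_cons, List.prod_nil, extendRho_none_left, extendRho_some, hspec]
      ring_nf
    · apply Jt_anti
      · apply sq_le_of_abs_le
        rw [abs_mul, abs_mul]
        exact mul_le_mul_of_nonneg_left hπev (abs_nonneg _)
      · have h1 : (ρ ev) ^ 2 < 1 := sq_lt_one_of_abs_lt_one (habsE ev hev)
        have h2 : 0 < ρnew ^ 2 := by positivity
        calc (ρnew * ρ ev) ^ 2 = ρnew ^ 2 * (ρ ev) ^ 2 := by ring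
          _ < ρnew ^ 2 * 1 := by nlinarith
          _ = ρnew ^ 2 := by ring
      · exact sq_lt_one_of_abs_lt_one hnewabs
  · -- e is an old edge on the path
    obtain ⟨e₀, he₀q, rfl⟩ := List.mem_map.mp hemem
    have he₀E : e₀ ∈ G.edgeSet := q.edges_subset_edgeSet he₀q
    rw [extendRho_map, hprod]
    obtain ⟨z, w₁, w₂, hzw₁, hw₁w₂, hzw₂ne, hznadj, hsw⟩ := exists_flank hG hcard he₀E
    have hadj1 : (attachLeaf G v).Adj (some z) (some w₁) := attach_adj_some_iff.mpr hzw₁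
    have hadj2 : (attachLeaf G v).Adj (some w₁) (some w₂) := attach_adj_some_iff.mpr hw₁w₂
    have hπe₀ : |π| ≤ |ρ e₀| := by
      obtain ⟨l', hfac, hsub, -⟩ := prod_factor ρ q.edges he₀q
      rw [hπ, hfac, abs_mul]
      have ht : |(l'.map ρ).prod| ≤ 1 := by
        apply list_prod_abs_le_one
        intro x hx
        obtain ⟨f, hf, rfl⟩ := List.mem_map.mp hx
        exact (habsE f (q.edges_subset_edgeSet (hsub f hf))).le
      calc |ρ e₀| * |(l'.map ρ).prod| ≤ |ρ e₀| * 1 :=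
            mul_le_mul_of_nonneg_left ht (abs_nonneg _)
        _ = |ρ e₀| := by ring
    refine ⟨Jt (ρ e₀) (ρ s(z, w₁) * ρ e₀), ⟨some z, some w₂,
      Walk.cons hadj1 (Walk.cons hadj2 Walk.nil), ?_, by simp [hzw₂ne], ?_,
      s(some w₁, some w₂), ?_, ?_⟩, ?_⟩
    · rw [Walk.isPath_def]
      simp [hzw₁.ne, hzw₂ne, hw₁w₂.ne]
    · rw [attach_adj_some_iff]
      exact hznadj
    · rw [Walk.edges_cons]
      exact List.mem_cons_of_mem _ List.mem_cons_self
    · simp only [Walk.edges_cons, Walk.edges_nil, List.map_cons, List.map_nil,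
        List.prod_cons, List.prod_nil, extendRho_some, hsw]
      ring_nf
    · apply Jt_anti
      · apply sq_le_of_abs_le
        rw [abs_mul, abs_mul]
        have h1 : |ρnew| * |π| ≤ |ρnew| * |ρ e₀| :=
          mul_le_mul_of_nonneg_left hπe₀ (abs_nonneg _)
        have h2 : |ρnew| * |ρ e₀| ≤ |ρ s(z, w₁)| * |ρ e₀| :=
          mul_le_mul_of_nonneg_right (hless _ (G.mem_edgeSet.mpr hzw₁)).le
            (abs_nonneg _)
        linarith
      · apply sq_lt_of_abs_lt
        rw [abs_mul]
        have h0 : 0 < |ρ e₀| := abs_pos.mpr (hρ e₀ he₀E).2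
        have h1 : |ρ s(z, w₁)| < 1 := habsE _ (G.mem_edgeSet.mpr hzw₁)
        nlinarith
      · exact sq_lt_one_of_abs_lt_one (habsE e₀ he₀E)

lemma key_step (hcard : 3 ≤ Fintype.card V)
    (G : SimpleGraph V) (hG : G.IsTree) (ρ : Sym2 V → ℝ)
    (hρ : ∀ e ∈ G.edgeSet, ρ e ∈ Set.Ioo (-1 : ℝ) 1 ∧ ρ e ≠ 0)
    (ρnew : ℝ) (hnew : ρnew ∈ Set.Ioo (-1 : ℝ) 1) (hnew0 : ρnew ≠ 0)
    (hless : ∀ e ∈ G.edgeSet, |ρnew| < |ρ e|)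
    (u v : V) (huv : mdeg G ρ u ≤ mdeg G ρ v) :
    ∀ x ∈ KSet (attachLeaf G u) (extendRho ρ ρnew),
      ∃ y ∈ KSet (attachLeaf G v) (extendRho ρ ρnew), y ≤ x := by
  rintro x ⟨p, q, P, hP, hne, hnadj, e, he, rfl⟩
  match p, q, P, hP, hne, hnadj, he with
  | none, none, P, hP, hne, hnadj, he => exact absurd rfl hne
  | none, some b, P, hP, hne, hnadj, he =>
    exact leaf_case hcard G hG ρ hρ ρnew hnew hnew0 hless u v huv P hP hnadj he
  | some a, none, P, hP, hne, hnadj, he =>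
    have hP' : P.reverse.IsPath := (Walk.isPath_reverse_iff P).mpr hP
    have hnadj' : ¬ (attachLeaf G u).Adj none (some a) := fun h => hnadj h.symm
    have he' : e ∈ P.reverse.edges := by
      rw [Walk.edges_reverse]
      exact List.mem_reverse.mpr he
    obtain ⟨y, hy, hyle⟩ :=
      leaf_case hcard G hG ρ hρ ρnew hnew hnew0 hless u v huv P.reverse hP' hnadj' he'
    refine ⟨y, hy, ?_⟩
    have hpe : (P.reverse.edges.map (extendRho ρ ρnew)).prod
        = (P.edges.map (extendRho ρ ρnew)).prod := by
      rw [Walk.edges_reverse, List.map_reverse, List.prod_reverse]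
    rwa [hpe] at hyle
  | some a, some b, P, hP, hne, hnadj, he =>
    have hnone := none_not_mem_support P hP (by simp) (by simp)
    obtain ⟨q0, hq0e, hq0s⟩ := walk_of_attach P hnone rfl rfl
    have hq0path : q0.IsPath := by
      rw [Walk.isPath_def]
      have := hP.support_nodup
      rw [hq0s] at this
      exact this.of_map
    have hmq : (q0.map (someHom G v)).edges = P.edges := by
      rw [edges_map_someHom, hq0e]
    refine ⟨_, ⟨some a, some b, q0.map (someHom G v),
      Walk.map_isPath_of_injective (Option.some_injective V) hq0path, hne, ?_, e,
      ?_, rfl⟩, ?_⟩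
    · rw [attach_adj_some_iff]
      intro h
      exact hnadj (attach_adj_some_iff.mpr h)
    · erw [hmq]
      exact he
    · erw [hmq]

lemma Ktilde_mono (hcard : 3 ≤ Fintype.card V)
    (G : SimpleGraph V) (hG : G.IsTree) (ρ : Sym2 V → ℝ)
    (hρ : ∀ e ∈ G.edgeSet, ρ e ∈ Set.Ioo (-1 : ℝ) 1 ∧ ρ e ≠ 0)
    (ρnew : ℝ) (hnew : ρnew ∈ Set.Ioo (-1 : ℝ) 1) (hnew0 : ρnew ≠ 0)
    (hless : ∀ e ∈ G.edgeSet, |ρnew| < |ρ e|)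
    (u v : V) (huv : mdeg G ρ u ≤ mdeg G ρ v) :
    Ktilde (attachLeaf G v) (extendRho ρ ρnew) ≤ Ktilde (attachLeaf G u) (extendRho ρ ρnew) := by
  rw [Ktilde_eq_sInf, Ktilde_eq_sInf]
  have hSu : (KSet (attachLeaf G u) (extendRho ρ ρnew)).Nonempty :=
    KSet_attach_nonempty hG.isConnected hcard u _
  have hbv : BddBelow (KSet (attachLeaf G v) (extendRho ρ ρnew)) :=
    ⟨0, fun y hy => KSet_nonneg (attach_edge_bound hρ hnew hnew0) y hy⟩
  apply le_csInf hSu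
  intro b hb
  obtain ⟨y, hy, hyb⟩ := key_step hcard G hG ρ hρ ρnew hnew hnew0 hless u v huv b hb
  exact (csInf_le hbv hy).trans hyb

end Main

/-- Attaching a new leaf with correlation ρnew (smaller in magnitude than all existing edge
correlations) to a vertex v of a tree: the resulting exponent K̃(T_v) is antitone in
m(v) = max{|ρ_e| : e contains v}. Consequently the loss K̃(T) − K̃(T_v) is minimized at any
vertex minimizing m, and maximized at any vertex maximizing m. -/
theorem attach_leaf_extremal {V : Type*} [Fintype V] (hd : 3 ≤ Fintype.card V)
    (G : SimpleGraph V) (hG : G.IsTree) (ρ : Sym2 V → ℝ)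
    (hρ : ∀ e ∈ G.edgeSet, ρ e ∈ Set.Ioo (-1 : ℝ) 1 ∧ ρ e ≠ 0)
    (ρnew : ℝ) (hnew : ρnew ∈ Set.Ioo (-1 : ℝ) 1) (hnew0 : ρnew ≠ 0)
    (hless : ∀ e ∈ G.edgeSet, |ρnew| < |ρ e|) :
    (∀ u v : V, mdeg G ρ u ≤ mdeg G ρ v →
      Ktilde (attachLeaf G v) (extendRho ρ ρnew) ≤
        Ktilde (attachLeaf G u) (extendRho ρ ρnew))
    ∧ (∀ v₀ : V, (∀ w : V, mdeg G ρ v₀ ≤ mdeg G ρ w) → ∀ v : V,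
        Ktilde G ρ - Ktilde (attachLeaf G v₀) (extendRho ρ ρnew)
          ≤ Ktilde G ρ - Ktilde (attachLeaf G v) (extendRho ρ ρnew))
    ∧ (∀ v₁ : V, (∀ w : V, mdeg G ρ w ≤ mdeg G ρ v₁) → ∀ v : V,
        Ktilde G ρ - Ktilde (attachLeaf G v) (extendRho ρ ρnew)
          ≤ Ktilde G ρ - Ktilde (attachLeaf G v₁) (extendRho ρ ρnew)) := by
  have main : ∀ u v : V, mdeg G ρ u ≤ mdeg G ρ v →
      Ktilde (attachLeaf G v) (extendRho ρ ρnew) ≤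
        Ktilde (attachLeaf G u) (extendRho ρ ρnew) :=
    fun u v huv => Ktilde_mono hd G hG ρ hρ ρnew hnew hnew0 hless u v huv
  refine ⟨main, ?_, ?_⟩
  · intro v₀ hmin v
    exact sub_le_sub_left (main v₀ v (hmin v)) _
  · intro v₁ hmax v
    exact sub_le_sub_left (main v v₁ (hmax v)) _
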